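/- Run AA-I on the linear system F(x) = Jx − b with J ∈ ℝ^{n×n} invertible: x_{t+1} = x_t − B_t⁻¹(J x_t − b) with each B_t invertible, s_t = x_{t+1} − x_t, and B_{t+1} = B_t + (J − B_t) s_t (P_t^⊥ s_t)ᵀ / ((P_t^⊥ s_t)ᵀ s_t), where P_t is the orthogonal projection onto span(s_0, …, s_{t−1}) (P_0 = 0) and P_t^⊥ = I − P_t. Suppose s_0, …, s_k are linearly independent and B_k ≠ J. Then ‖J − B_{k+1}‖_F² ≤ (1 − λ_{n−k}((J − B_k)ᵀ(J − B_k)) / Σ_{i=1}^{n−k} λ_i((J − B_k)ᵀ(J − B_k))) · ‖J − B_k‖_F², where λ_i(A) denotes the i-th largest eigenvalue of the positive semidefinite matrix A. -/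

import Mathlib

open Matrix MeasureTheory ProbabilityTheory Finset

/-- Euclidean norm of a vector in ℝⁿ. -/
noncomputable def enorm' {n : ℕ} (v : Fin n → ℝ) : ℝ := Real.sqrt (∑ i, (v i) ^ 2)

/-- Frobenius norm of a real n×n matrix. -/
noncomputable def frob {n : ℕ} (A : Matrix (Fin n) (Fin n) ℝ) : ℝ :=
  Real.sqrt (∑ i, ∑ j, (A i j) ^ 2)

/-- Spectral (ℓ₂ operator) norm of a real n×n matrix. -/
noncomputable def opNorm' {n : ℕ} (A : Matrix (Fin n) (Fin n) ℝ) : ℝ :=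
  ‖Matrix.toEuclideanCLM (𝕜 := ℝ) A‖

/-- The AAA update: AAA(B,J,s) = B + ((J−B) s sᵀ (J−B)ᵀ / (sᵀ(J−B)ᵀ(J−B)s)) (J−B)
if (J−B)s ≠ 0, and B otherwise. -/
noncomputable def AAAupd {n : ℕ} (B J : Matrix (Fin n) (Fin n) ℝ) (s : Fin n → ℝ) :
    Matrix (Fin n) (Fin n) ℝ :=
  if (J - B).mulVec s = 0 then B
  else B + (((J - B).mulVec s) ⬝ᵥ ((J - B).mulVec s))⁻¹ •
      (Matrix.vecMulVec ((J - B).mulVec s) ((J - B).mulVec s) * (J - B))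

/-- `s` is a standard basis vector maximizing ‖R e_i‖ over the standard basis. -/
noncomputable def IsGreedy {n : ℕ} (R : Matrix (Fin n) (Fin n) ℝ) (s : Fin n → ℝ) : Prop :=
  ∃ i : Fin n, s = Pi.single i 1 ∧
    ∀ j : Fin n, enorm' (R.mulVec (Pi.single j 1)) ≤ enorm' (R.mulVec (Pi.single i 1))

/-- `P` is the orthogonal-projection matrix onto the subspace `V` of ℝⁿ
(symmetric, idempotent, range `V`, identity on `V`). -/
def IsOrthProj {n : ℕ} (P : Matrix (Fin n) (Fin n) ℝ) (V : Submodule ℝ (Fin n → ℝ)) : Prop :=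
  P.IsSymm ∧ P * P = P ∧ (∀ v, P.mulVec v ∈ V) ∧ (∀ v ∈ V, P.mulVec v = v)

/-- Standard Gaussian measure on ℝⁿ: the n-fold product of N(0,1). -/
noncomputable def stdGaussianPi (n : ℕ) : MeasureTheory.Measure (Fin n → ℝ) :=
  MeasureTheory.Measure.pi fun _ => ProbabilityTheory.gaussianReal 0 1

private lemma vecMulVec_mulVec' {n : ℕ} (a b v : Fin n → ℝ) :
    (Matrix.vecMulVec a b).mulVec v = (b ⬝ᵥ v) • a := by
  ext i
  simp only [Matrix.mulVec, Matrix.vecMulVec_apply, dotProduct, Pi.smul_apply,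
    smul_eq_mul, Finset.sum_mul]
  exact Finset.sum_congr rfl fun j _ => by ring

private lemma frob_sq {n : ℕ} (M : Matrix (Fin n) (Fin n) ℝ) :
    frob M ^ 2 = ∑ i, ∑ j, (M i j) ^ 2 := by
  rw [frob, Real.sq_sqrt]
  positivity

theorem stmt_6 {n : ℕ} (hn : 0 < n)
    (J : Matrix (Fin n) (Fin n) ℝ) (hJ : IsUnit J) (b : Fin n → ℝ)
    (x : ℕ → Fin n → ℝ) (B : ℕ → Matrix (Fin n) (Fin n) ℝ)
    (s : ℕ → Fin n → ℝ) (P : ℕ → Matrix (Fin n) (Fin n) ℝ)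
    (hBinv : ∀ t, IsUnit (B t))
    (hx : ∀ t, x (t + 1) = x t - (B t)⁻¹.mulVec (J.mulVec (x t) - b))
    (hs : ∀ t, s t = x (t + 1) - x t)
    (hP : ∀ t, IsOrthProj (P t) (Submodule.span ℝ (s '' Set.Iio t)))
    (hBup : ∀ t, B (t + 1) = B t +
      ((((1 : Matrix (Fin n) (Fin n) ℝ) - P t).mulVec (s t)) ⬝ᵥ (s t))⁻¹ •
        Matrix.vecMulVec ((J - B t).mulVec (s t))
          (((1 : Matrix (Fin n) (Fin n) ℝ) - P t).mulVec (s t)))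
    (k : ℕ)
    (hindep : LinearIndependent ℝ (fun i : Fin (k + 1) => s i))
    (hBk : B k ≠ J)
    (hA : ((J - B k)ᵀ * (J - B k)).IsHermitian)
    (lam : ℕ → ℝ)
    (hlam_anti : ∀ i j : ℕ, i ≤ j → j < n → lam j ≤ lam i)
    (hlam_perm : ∃ e : Fin n ≃ Fin n, ∀ i : Fin n, lam i = hA.eigenvalues (e i)) :
    frob (J - B (k + 1)) ^ 2 ≤
      (1 - lam (n - k - 1) / ∑ i ∈ Finset.range (n - k), lam i) * frob (J - B k) ^ 2 := by
  classical
  -- k + 1 ≤ n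
  have hkn : k + 1 ≤ n := by
    have := hindep.fintype_card_le_finrank
    simpa [Module.finrank_fintype_fun_eq_card] using this
  -- orthogonality of the residual direction to the span
  have horth : ∀ t, ∀ w ∈ Submodule.span ℝ (s '' Set.Iio t),
      (((1 : Matrix (Fin n) (Fin n) ℝ) - P t).mulVec (s t)) ⬝ᵥ w = 0 := by
    intro t w hw
    obtain ⟨hsym, hidem, hrange, hfix⟩ := hP t
    set u := ((1 : Matrix (Fin n) (Fin n) ℝ) - P t).mulVec (s t) with hu
    have hu' : u = s t - (P t).mulVec (s t) := by
      rw [hu, Matrix.sub_mulVec, Matrix.one_mulVec]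
    have hPu : (P t).mulVec u = 0 := by
      rw [hu', Matrix.mulVec_sub, Matrix.mulVec_mulVec, hidem, sub_self]
    calc u ⬝ᵥ w = u ⬝ᵥ (P t).mulVec w := by rw [hfix w hw]
      _ = (u ᵥ* P t) ⬝ᵥ w := (Matrix.dotProduct_mulVec _ _ _)
      _ = ((P t)ᵀ.mulVec u) ⬝ᵥ w := by rw [Matrix.mulVec_transpose]
      _ = 0 := by rw [hsym.eq, hPu, zero_dotProduct]
  -- s t is not in the span of previous s's, for t ≤ k
  have hnotmem : ∀ t, t ≤ k → s t ∉ Submodule.span ℝ (s '' Set.Iio t) := by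
    intro t ht hmem
    have himg : (fun i : Fin (k+1) => s i) '' {i : Fin (k+1) | (i : ℕ) < t}
        = s '' Set.Iio t := by
      ext y
      constructor
      · rintro ⟨i, hi, rfl⟩; exact ⟨i, hi, rfl⟩
      · rintro ⟨m, hm, rfl⟩
        exact ⟨⟨m, by have : m < t := hm; omega⟩, by simpa using hm, rfl⟩
    have hnm := hindep.notMem_span_image (s := {i : Fin (k+1) | (i : ℕ) < t})
        (x := ⟨t, by omega⟩) (by simp)
    rw [himg] at hnm
    exact hnm hmem
  -- the normalization constant is positive
  have hueq : ∀ t, t ≤ k →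
      (((1 : Matrix (Fin n) (Fin n) ℝ) - P t).mulVec (s t)) ⬝ᵥ (s t)
        = (((1 : Matrix (Fin n) (Fin n) ℝ) - P t).mulVec (s t)) ⬝ᵥ
          (((1 : Matrix (Fin n) (Fin n) ℝ) - P t).mulVec (s t)) ∧
      (((1 : Matrix (Fin n) (Fin n) ℝ) - P t).mulVec (s t)) ≠ 0 := by
    intro t ht
    obtain ⟨hsym, hidem, hrange, hfix⟩ := hP t
    set u := ((1 : Matrix (Fin n) (Fin n) ℝ) - P t).mulVec (s t) with hu
    have hu' : u = s t - (P t).mulVec (s t) := by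
      rw [hu, Matrix.sub_mulVec, Matrix.one_mulVec]
    have hune : u ≠ 0 := by
      intro h
      apply hnotmem t ht
      have h2 : s t - (P t).mulVec (s t) = 0 := by rw [← hu']; exact h
      have hst : s t = (P t).mulVec (s t) := by
        have := sub_eq_zero.mp h2
        exact this
      rw [hst]; exact hrange _
    refine ⟨?_, hune⟩
    have hst : s t = u + (P t).mulVec (s t) := by rw [hu']; abel
    calc u ⬝ᵥ s t = u ⬝ᵥ (u + (P t).mulVec (s t)) := by rw [← hst]
      _ = u ⬝ᵥ u + u ⬝ᵥ ((P t).mulVec (s t)) := dotProduct_add _ _ _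
      _ = u ⬝ᵥ u := by rw [horth t _ (hrange (s t)), add_zero]
  have hupos : ∀ t, t ≤ k →
      0 < (((1 : Matrix (Fin n) (Fin n) ℝ) - P t).mulVec (s t)) ⬝ᵥ (s t) := by
    intro t ht
    obtain ⟨h1, h2⟩ := hueq t ht
    rw [h1]
    have hnn : (0:ℝ) ≤ (((1 : Matrix (Fin n) (Fin n) ℝ) - P t).mulVec (s t)) ⬝ᵥ
        (((1 : Matrix (Fin n) (Fin n) ℝ) - P t).mulVec (s t)) :=
      Finset.sum_nonneg fun i _ => mul_self_nonneg _
    exact lt_of_le_of_ne hnn (fun h => h2 (dotProduct_self_eq_zero.mp h.symm))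
  -- B t agrees with J on all previous directions
  have hkill : ∀ t, t ≤ k → ∀ i, i < t → (J - B t).mulVec (s i) = 0 := by
    intro t
    induction t with
    | zero => intro _ i hi; omega
    | succ t ih =>
      intro ht i hi
      have ht' : t ≤ k := by omega
      set u := ((1 : Matrix (Fin n) (Fin n) ℝ) - P t).mulVec (s t) with hudef
      have hcpos := hupos t ht'
      have key : (J - B (t+1)).mulVec (s i)
          = (J - B t).mulVec (s i)
            - (u ⬝ᵥ s t)⁻¹ • ((u ⬝ᵥ s i) • ((J - B t).mulVec (s t))) := by
        rw [hBup t, sub_add_eq_sub_sub, Matrix.sub_mulVec, Matrix.smul_mulVec,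
          vecMulVec_mulVec']
      rcases Nat.lt_succ_iff_lt_or_eq.mp hi with hi' | rfl
      · have h1 : (J - B t).mulVec (s i) = 0 := ih ht' i hi'
        have h2 : u ⬝ᵥ s i = 0 :=
          horth t (s i) (Submodule.subset_span ⟨i, hi', rfl⟩)
        rw [key, h1, h2]
        simp
      · rw [key, smul_smul, inv_mul_cancel₀ (ne_of_gt hcpos), one_smul, sub_self]
  -- abbreviations at step k
  set R := J - B k with hRdef
  set A := Rᵀ * R with hAdef
  obtain ⟨e, he⟩ := hlam_perm
  have hRzero : ∀ w ∈ Submodule.span ℝ (s '' Set.Iio k), R.mulVec w = 0 := by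
    intro w hw
    induction hw using Submodule.span_induction with
    | mem x hx =>
      obtain ⟨m, hm, rfl⟩ := hx
      exact hkill k le_rfl m hm
    | zero => simp
    | add x y hx hy hx' hy' => rw [Matrix.mulVec_add, hx', hy', add_zero]
    | smul c x hx hx' => rw [Matrix.mulVec_smul, hx', smul_zero]
  obtain ⟨hsymk, hidemk, hrangek, hfixk⟩ := hP k
  set u := ((1 : Matrix (Fin n) (Fin n) ℝ) - P k).mulVec (s k) with hudef
  obtain ⟨hck, hune⟩ := hueq k le_rfl
  have hcpos : 0 < u ⬝ᵥ u := by
    have := hupos k le_rfl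
    rwa [hck] at this
  have hcne : u ⬝ᵥ u ≠ 0 := ne_of_gt hcpos
  set w := R.mulVec u with hwdef
  -- the update identity
  have hRu : R.mulVec (s k) = w := by
    have hu' : u = s k - (P k).mulVec (s k) := by
      rw [hudef, Matrix.sub_mulVec, Matrix.one_mulVec]
    have h0 : R.mulVec (s k - u) = 0 := by
      have : s k - u = (P k).mulVec (s k) := by rw [hu']; abel
      rw [this]
      exact hRzero _ (hrangek _)
    rw [Matrix.mulVec_sub] at h0
    have := sub_eq_zero.mp h0
    rw [hwdef, this]
  have hE : J - B (k + 1) = R - (u ⬝ᵥ u)⁻¹ • Matrix.vecMulVec w u := by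
    rw [hBup k, sub_add_eq_sub_sub, ← hudef, ← hck, ← hRdef, hRu]
  -- Frobenius norm computation
  set W := w ⬝ᵥ w with hWdef
  have hlhs : frob (J - B (k + 1)) ^ 2 = frob R ^ 2 - (u ⬝ᵥ u)⁻¹ * W := by
    rw [hE, frob_sq, frob_sq]
    have hexp : ∀ i j, (R - (u ⬝ᵥ u)⁻¹ • Matrix.vecMulVec w u) i j
        = R i j - (u ⬝ᵥ u)⁻¹ * (w i * u j) := by
      intro i j
      simp [Matrix.sub_apply, Matrix.smul_apply, Matrix.vecMulVec_apply]
    have hrow : ∀ i, ∑ j, (R i j - (u ⬝ᵥ u)⁻¹ * (w i * u j)) ^ 2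
        = (∑ j, R i j ^ 2) - 2 * (u ⬝ᵥ u)⁻¹ * (w i * w i)
          + (u ⬝ᵥ u)⁻¹ ^ 2 * (w i * w i) * (u ⬝ᵥ u) := by
      intro i
      have h1 : ∀ j, (R i j - (u ⬝ᵥ u)⁻¹ * (w i * u j)) ^ 2
          = R i j ^ 2 - (2 * (u ⬝ᵥ u)⁻¹ * w i) * (R i j * u j)
            + ((u ⬝ᵥ u)⁻¹ ^ 2 * (w i * w i)) * (u j * u j) := by intro j; ring
      simp_rw [h1]
      rw [Finset.sum_add_distrib, Finset.sum_sub_distrib, ← Finset.mul_sum, ← Finset.mul_sum]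
      have hw1 : ∑ j, R i j * u j = w i := rfl
      have hw2 : ∑ j, u j * u j = u ⬝ᵥ u := rfl
      rw [hw1, hw2]
      ring
    calc ∑ i, ∑ j, (R - (u ⬝ᵥ u)⁻¹ • Matrix.vecMulVec w u) i j ^ 2
        = ∑ i, ((∑ j, R i j ^ 2) - 2 * (u ⬝ᵥ u)⁻¹ * (w i * w i)
          + (u ⬝ᵥ u)⁻¹ ^ 2 * (w i * w i) * (u ⬝ᵥ u)) := by
          refine Finset.sum_congr rfl fun i _ => ?_
          simp_rw [hexp]
          exact hrow i
      _ = (∑ i, ∑ j, R i j ^ 2) - 2 * (u ⬝ᵥ u)⁻¹ * W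
          + (u ⬝ᵥ u)⁻¹ ^ 2 * W * (u ⬝ᵥ u) := by
          rw [Finset.sum_add_distrib, Finset.sum_sub_distrib]
          have : ∑ i, w i * w i = W := rfl
          rw [← Finset.mul_sum, this]
          congr 1
          rw [← Finset.sum_mul, ← Finset.mul_sum, this]
      _ = (∑ i, ∑ j, R i j ^ 2) - (u ⬝ᵥ u)⁻¹ * W := by
          field_simp
          ring
  -- spectral machinery
  set V : Matrix (Fin n) (Fin n) ℝ := (hA.eigenvectorUnitary : Matrix (Fin n) (Fin n) ℝ)
    with hVdef
  have hstar : star V = Vᵀ := by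
    rw [Matrix.star_eq_conjTranspose, Matrix.conjTranspose_eq_transpose_of_trivial]
  have hVV : V * Vᵀ = 1 := by
    rw [← hstar]; exact (Matrix.mem_unitaryGroup_iff).mp hA.eigenvectorUnitary.2
  have hVV' : Vᵀ * V = 1 := by
    rw [← hstar]; exact (Matrix.mem_unitaryGroup_iff').mp hA.eigenvectorUnitary.2
  have hofReal : (RCLike.ofReal ∘ hA.eigenvalues : Fin n → ℝ) = hA.eigenvalues := by
    funext i; simp
  have hspec : A = V * Matrix.diagonal hA.eigenvalues * Vᵀ := by
    have h := hA.spectral_theorem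
    rw [Unitary.conjStarAlgAut_apply, ← hVdef, hstar, hofReal] at h
    exact h
  have htraceA : Matrix.trace A = ∑ i, hA.eigenvalues i := by
    conv_lhs => rw [hspec]
    rw [Matrix.trace_mul_cycle, hVV', one_mul, Matrix.trace_diagonal]
  have htrace_frob : Matrix.trace A = frob R ^ 2 := by
    have h1 : Matrix.trace A = ∑ i, ∑ j, R j i * R j i := by
      simp [hAdef, Matrix.trace, Matrix.diag, Matrix.mul_apply, Matrix.transpose_apply]
    rw [h1, frob_sq]
    rw [Finset.sum_comm]
    simp_rw [← pow_two]
  have hsum_univ : ∑ i ∈ Finset.range n, lam i = ∑ i, hA.eigenvalues i := by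
    rw [← Fin.sum_univ_eq_sum_range (fun m => lam m) n]
    have h1 : (∑ i : Fin n, lam ↑i) = ∑ i : Fin n, hA.eigenvalues (e i) :=
      Finset.sum_congr rfl fun i _ => he i
    rw [h1]
    exact Equiv.sum_comp e _
  -- rank bounds
  have hranklin : LinearIndependent ℝ (fun i : Fin k => s ↑i) := by
    have hcomp : (fun i : Fin k => s ↑i)
        = (fun i : Fin (k+1) => s ↑i) ∘ (Fin.castLE (by omega)) := by
      funext i; simp
    rw [hcomp]
    exact hindep.comp _ (Fin.castLE_injective _)
  have hsetK : s '' Set.Iio k = Set.range (fun i : Fin k => s ↑i) := by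
    ext z; constructor
    · rintro ⟨m, hm, rfl⟩; exact ⟨⟨m, hm⟩, rfl⟩
    · rintro ⟨i, rfl⟩; exact ⟨↑i, i.isLt, rfl⟩
  have hfinspan : Module.finrank ℝ (Submodule.span ℝ (s '' Set.Iio k)) = k := by
    rw [hsetK, finrank_span_eq_card hranklin]; simp
  set K := LinearMap.ker A.mulVecLin with hKdef
  have hspanK : Submodule.span ℝ (s '' Set.Iio k) ≤ K := by
    rw [Submodule.span_le]
    rintro z ⟨m, hm, rfl⟩
    have h1 : R.mulVec (s m) = 0 := hkill k le_rfl m hm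
    have h2 : A.mulVec (s m) = 0 := by
      rw [hAdef, ← Matrix.mulVec_mulVec, h1, Matrix.mulVec_zero]
    simpa [hKdef, LinearMap.mem_ker, Matrix.mulVecLin_apply] using h2
  have hrankker : A.rank + Module.finrank ℝ K = n := by
    have h := LinearMap.finrank_range_add_finrank_ker (A.mulVecLin)
    rw [Module.finrank_fintype_fun_eq_card] at h
    simpa [Matrix.rank, hKdef] using h
  have hkK : k ≤ Module.finrank ℝ K := by
    rw [← hfinspan]
    exact Submodule.finrank_mono hspanK
  have hrank_le : A.rank ≤ n - k := by omega
  have hcard : (Finset.univ.filter (fun i : Fin n => lam ↑i ≠ 0)).card = A.rank := by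
    rw [hA.rank_eq_card_non_zero_eigs, Fintype.card_subtype]
    apply Finset.card_bij (fun i _ => e i)
    · intro a ha
      simp only [Finset.mem_filter, Finset.mem_univ, true_and] at ha ⊢
      rwa [← he a]
    · intro a _ b _ h; exact e.injective h
    · intro b hb
      refine ⟨e.symm b, ?_, by simp⟩
      simp only [Finset.mem_filter, Finset.mem_univ, true_and] at hb ⊢
      rwa [he, e.apply_symm_apply]
  have heig_nonneg : ∀ i : Fin n, 0 ≤ hA.eigenvalues i := by
    intro i
    have hpsd : A.PosSemidef := by
      have h := Matrix.posSemidef_conjTranspose_mul_self R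
      rwa [Matrix.conjTranspose_eq_transpose_of_trivial] at h
    exact hpsd.eigenvalues_nonneg i
  have hlam_nonneg : ∀ m, m < n → 0 ≤ lam m := by
    intro m hm
    have h := heig_nonneg (e ⟨m, hm⟩)
    rwa [← he ⟨m, hm⟩] at h
  have hlamzero : ∀ m, n - k ≤ m → m < n → lam m = 0 := by
    intro m h1 h2
    by_contra hne
    have hmpos : 0 < lam m := lt_of_le_of_ne (hlam_nonneg m h2) (Ne.symm hne)
    have hsub : m + 1 ≤ (Finset.univ.filter (fun i : Fin n => lam ↑i ≠ 0)).card := by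
      have hmaps : ∀ j : Fin (m+1), (⟨↑j, by omega⟩ : Fin n)
          ∈ Finset.univ.filter (fun i : Fin n => lam ↑i ≠ 0) := by
        intro j
        simp only [Finset.mem_filter, Finset.mem_univ, true_and]
        have hle : lam m ≤ lam ↑j := hlam_anti ↑j m (by omega) h2
        exact ne_of_gt (lt_of_lt_of_le hmpos hle)
      have := Finset.card_le_card_of_injOn
        (s := (Finset.univ : Finset (Fin (m+1))))
        (fun j : Fin (m+1) => (⟨↑j, by omega⟩ : Fin n))
        (fun j _ => hmaps j)
        (fun a _ b _ hab => by simpa [Fin.ext_iff] using hab)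
      simpa using this
    omega
  -- quadratic forms in eigen-coordinates
  set y := Vᵀ.mulVec u with hydef
  have hyy : u ⬝ᵥ u = y ⬝ᵥ y := by
    have h1 : y ⬝ᵥ y = (u ᵥ* V) ⬝ᵥ (Vᵀ *ᵥ u) := by rw [hydef, Matrix.mulVec_transpose]
    have h2 : (u ᵥ* V) ⬝ᵥ (Vᵀ *ᵥ u) = u ⬝ᵥ (V *ᵥ (Vᵀ *ᵥ u)) :=
      (Matrix.dotProduct_mulVec _ _ _).symm
    rw [h1, h2, Matrix.mulVec_mulVec, hVV, Matrix.one_mulVec]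
  have hAu : u ⬝ᵥ A.mulVec u = ∑ i, hA.eigenvalues i * (y i * y i) := by
    have h0 : (V * Matrix.diagonal hA.eigenvalues * Vᵀ) *ᵥ u
        = V *ᵥ ((Matrix.diagonal hA.eigenvalues) *ᵥ (Vᵀ *ᵥ u)) := by
      rw [← Matrix.mulVec_mulVec, ← Matrix.mulVec_mulVec]
    conv_lhs => rw [hspec, h0, Matrix.dotProduct_mulVec, ← Matrix.mulVec_transpose, ← hydef]
    simp only [dotProduct, Matrix.mulVec_diagonal]
    exact Finset.sum_congr rfl fun i _ => by ring
  have hWAu : W = u ⬝ᵥ A.mulVec u := by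
    calc W = (R *ᵥ u) ⬝ᵥ w := by rw [hWdef, hwdef]
      _ = (u ᵥ* Rᵀ) ⬝ᵥ w := by rw [Matrix.vecMul_transpose]
      _ = u ⬝ᵥ (Rᵀ *ᵥ w) := (Matrix.dotProduct_mulVec _ _ _).symm
      _ = u ⬝ᵥ (A *ᵥ u) := by rw [hwdef, Matrix.mulVec_mulVec, ← hAdef]
  have hy0 : 0 < lam (n-k-1) → ∀ i : Fin n, hA.eigenvalues i = 0 → y i = 0 := by
    intro hpos i h0
    have hge : n - k ≤ (Finset.univ.filter (fun i : Fin n => lam ↑i ≠ 0)).card := by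
      have hmaps : ∀ j : Fin (n-k), (⟨↑j, by omega⟩ : Fin n)
          ∈ Finset.univ.filter (fun i : Fin n => lam ↑i ≠ 0) := by
        intro j
        simp only [Finset.mem_filter, Finset.mem_univ, true_and]
        have hle : lam (n-k-1) ≤ lam ↑j := hlam_anti ↑j (n-k-1) (by omega) (by omega)
        exact ne_of_gt (lt_of_lt_of_le hpos hle)
      have := Finset.card_le_card_of_injOn
        (s := (Finset.univ : Finset (Fin (n-k))))
        (fun j : Fin (n-k) => (⟨↑j, by omega⟩ : Fin n))
        (fun j _ => hmaps j)
        (fun a _ b _ hab => by simpa [Fin.ext_iff] using hab)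
      simpa using this
    have hrank_eq : A.rank = n - k := le_antisymm hrank_le (by omega)
    have hKfin : Module.finrank ℝ K = k := by omega
    have hKeq : Submodule.span ℝ (s '' Set.Iio k) = K :=
      Submodule.eq_of_le_of_finrank_le hspanK (by rw [hKfin, hfinspan])
    have hbK : (⇑(hA.eigenvectorBasis i) : Fin n → ℝ) ∈ K := by
      have hmv : A *ᵥ ⇑(hA.eigenvectorBasis i) = 0 := by
        rw [hA.mulVec_eigenvectorBasis i, h0, zero_smul]
      simpa [hKdef, LinearMap.mem_ker, Matrix.mulVecLin_apply] using hmv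
    have hbspan : (⇑(hA.eigenvectorBasis i) : Fin n → ℝ)
        ∈ Submodule.span ℝ (s '' Set.Iio k) := by rw [hKeq]; exact hbK
    have hdot : u ⬝ᵥ (⇑(hA.eigenvectorBasis i) : Fin n → ℝ) = 0 := horth k _ hbspan
    have hyi : y i = (⇑(hA.eigenvectorBasis i) : Fin n → ℝ) ⬝ᵥ u := by
      rw [hydef]
      simp only [Matrix.mulVec, Matrix.transpose_apply, dotProduct, hVdef,
        Matrix.IsHermitian.eigenvectorUnitary_apply]
    rw [hyi, dotProduct_comm]
    exact hdot
  -- put everything together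
  have hSfrob : ∑ i ∈ Finset.range (n-k), lam i = frob R ^ 2 := by
    have htail : ∑ i ∈ Finset.Ico (n-k) n, lam i = 0 :=
      Finset.sum_eq_zero fun m hm =>
        hlamzero m (Finset.mem_Ico.mp hm).1 (Finset.mem_Ico.mp hm).2
    have hsplit : (∑ i ∈ Finset.range (n-k), lam i) + ∑ i ∈ Finset.Ico (n-k) n, lam i
        = ∑ i ∈ Finset.range n, lam i := by
      rw [Finset.range_eq_Ico, Finset.range_eq_Ico]
      exact Finset.sum_Ico_consecutive lam (Nat.zero_le (n-k)) (by omega : n - k ≤ n)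
    rw [htail, add_zero] at hsplit
    rw [hsplit, hsum_univ, ← htraceA, htrace_frob]
  have hFpos : 0 < frob R ^ 2 := by
    have hRne : R ≠ 0 := sub_ne_zero.mpr (Ne.symm hBk)
    obtain ⟨i, j, hij⟩ : ∃ i j, R i j ≠ 0 := by
      by_contra hcon; push_neg at hcon
      exact hRne (by ext i j; simpa using hcon i j)
    rw [frob_sq]
    have h1 : R i j ^ 2 ≤ ∑ j', R i j' ^ 2 :=
      Finset.single_le_sum (f := fun j' => R i j' ^ 2)
        (fun _ _ => sq_nonneg _) (Finset.mem_univ j)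
    have h2 : (∑ j', R i j' ^ 2) ≤ ∑ i', ∑ j', R i' j' ^ 2 :=
      Finset.single_le_sum (f := fun i' => ∑ j', R i' j' ^ 2)
        (fun _ _ => Finset.sum_nonneg fun _ _ => sq_nonneg _) (Finset.mem_univ i)
    have h0 : 0 < R i j ^ 2 := by positivity
    linarith
  have hkey : lam (n-k-1) * (u ⬝ᵥ u) ≤ W := by
    by_cases hpos : 0 < lam (n-k-1)
    · rw [hWAu, hAu, hyy]
      rw [dotProduct, Finset.mul_sum]
      refine Finset.sum_le_sum fun i _ => ?_
      by_cases hge : lam (n-k-1) ≤ hA.eigenvalues i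
      · exact mul_le_mul_of_nonneg_right hge (mul_self_nonneg _)
      · push_neg at hge
        have h0 : hA.eigenvalues i = 0 := by
          have hlj : lam ↑(e.symm i) = hA.eigenvalues i := by
            rw [he (e.symm i), e.apply_symm_apply]
          have hjge : n - k ≤ ↑(e.symm i) := by
            by_contra hcon
            push_neg at hcon
            have hle : lam (n-k-1) ≤ lam ↑(e.symm i) :=
              hlam_anti ↑(e.symm i) (n-k-1) (by omega) (by omega)
            rw [hlj] at hle; linarith
          have hz := hlamzero ↑(e.symm i) hjge (e.symm i).isLt
          rw [hlj] at hz
          exact hz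
        rw [h0, hy0 hpos i h0]
        simp
    · push_neg at hpos
      have hW0 : 0 ≤ W := Finset.sum_nonneg fun i _ => mul_self_nonneg _
      have h1 : lam (n-k-1) * (u ⬝ᵥ u) ≤ 0 * (u ⬝ᵥ u) :=
        mul_le_mul_of_nonneg_right hpos hcpos.le
      rw [zero_mul] at h1
      linarith
  rw [hlhs, hSfrob]
  have hdiv : (1 - lam (n-k-1) / frob R ^ 2) * frob R ^ 2 = frob R ^ 2 - lam (n-k-1) := by
    rw [sub_mul, one_mul, div_mul_cancel₀ _ hFpos.ne']
  rw [hdiv]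
  have hfin : lam (n-k-1) ≤ (u ⬝ᵥ u)⁻¹ * W := by
    rw [inv_mul_eq_div]
    exact (le_div_iff₀ hcpos).mpr hkey
  linarith
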